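/- Let g be a centerless Lie 2-algebra with MT(g) = 3, standard maximal torus t with toral basis {t1, t2, t3} and dual basis {α, β, γ} of t*, whose t-root set is Δ = {α, β, γ, α+β, α+γ, β+γ, α+β+γ}. Assume dim(g_α) = dim(g_β) = dim(g_γ) and dim(g_γ) > dim(g_ξ) for every ξ ∈ {α+β, α+γ, β+γ, α+β+γ}. Then I := span{t1 + t2, t1 + t3} ⊕ n ⊕ ⊕_{ξ∈Δ} g_ξ is an ideal of g. -/

import Mathlib

/-- A 2-map on a Lie algebra over the field `F` (char 2 version of a restricted structure):
`(c • x)^[2] = c^2 • x^[2]`, `ad (x^[2]) = (ad x) ∘ (ad x)` and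
`(x+y)^[2] = x^[2] + y^[2] + [x,y]`. -/
structure IsTwoMap (F : Type*) [Field F] {g : Type*} [LieRing g] [LieAlgebra F g]
    (p : g → g) : Prop where
  smul_pow : ∀ (c : F) (x : g), p (c • x) = (c ^ 2) • p x
  ad_pow : ∀ x y : g, ⁅p x, y⁆ = ⁅x, ⁅x, y⁆⁆
  add_pow : ∀ x y : g, p (x + y) = p x + p y + ⁅x, y⁆

/-- An element is 2-nilpotent if some iterate of the 2-map annihilates it. -/
def IsTwoNilpotent {g : Type*} [Zero g] (p : g → g) (x : g) : Prop :=
  ∃ k : ℕ, p^[k] x = 0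

/-- A torus of a Lie 2-algebra: a Lie subalgebra closed under the 2-map on which the
2-map is invertible (bijective). -/
def IsTorus (F : Type*) [Field F] {g : Type*} [LieRing g] [LieAlgebra F g]
    (p : g → g) (t : LieSubalgebra F g) : Prop :=
  (∀ x ∈ t, p x ∈ t) ∧ Set.BijOn p (t : Set g) (t : Set g)

/-- A maximal torus of a Lie 2-algebra. -/
def IsMaxTorus (F : Type*) [Field F] {g : Type*} [LieRing g] [LieAlgebra F g]
    (p : g → g) (t : LieSubalgebra F g) : Prop :=
  IsTorus F p t ∧ ∀ s : LieSubalgebra F g, IsTorus F p s → t ≤ s → s = t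

/-- The weight (root) space of a linear functional `lam` on a torus `t`:
`g_lam = {v | [x, v] = lam x • v for all x ∈ t}`. -/
def rootSpace {F : Type*} [Field F] {g : Type*} [LieRing g] [LieAlgebra F g]
    (t : LieSubalgebra F g) (lam : Module.Dual F t) : Submodule F g where
  carrier := {v | ∀ x : t, ⁅(x : g), v⁆ = lam x • v}
  add_mem' := by
    intro a b ha hb x
    rw [lie_add, ha x, hb x, smul_add]
  zero_mem' := by
    intro x
    rw [lie_zero, smul_zero]
  smul_mem' := by
    intro c v hv x
    rw [lie_smul, hv x, smul_comm]

/-- The set of `t`-roots: nonzero functionals with nonzero root space. -/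
def rootSet {F : Type*} [Field F] {g : Type*} [LieRing g] [LieAlgebra F g]
    (t : LieSubalgebra F g) : Set (Module.Dual F t) :=
  {lam | lam ≠ 0 ∧ rootSpace t lam ≠ ⊥}

/-- The subspace `N(σ, δ) = {x ∈ g_σ : [x, g_σ] ⊆ n and [[x, g_δ], g_{σ+δ}] ⊆ n}`,
given as `Nspace n g_σ g_δ g_{σ+δ}`. -/
def Nspace {F : Type*} [Field F] {g : Type*} [LieRing g] [LieAlgebra F g]
    (n gs gd gsd : Submodule F g) : Submodule F g where
  carrier := {x | x ∈ gs ∧ (∀ y ∈ gs, ⁅x, y⁆ ∈ n) ∧ ∀ z ∈ gd, ∀ w ∈ gsd, ⁅⁅x, z⁆, w⁆ ∈ n}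
  add_mem' := by
    intro a b ha hb
    obtain ⟨ha1, ha2, ha3⟩ := ha
    obtain ⟨hb1, hb2, hb3⟩ := hb
    refine ⟨gs.add_mem ha1 hb1, fun y hy => ?_, fun z hz w hw => ?_⟩
    · rw [add_lie]
      exact n.add_mem (ha2 y hy) (hb2 y hy)
    · rw [add_lie, add_lie]
      exact n.add_mem (ha3 z hz w hw) (hb3 z hz w hw)
  zero_mem' := by
    refine ⟨gs.zero_mem, fun y hy => ?_, fun z hz w hw => ?_⟩
    · rw [zero_lie]; exact n.zero_mem
    · rw [zero_lie, zero_lie]; exact n.zero_mem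
  smul_mem' := by
    intro c x hx
    obtain ⟨h1, h2, h3⟩ := hx
    refine ⟨gs.smul_mem c h1, fun y hy => ?_, fun z hz w hw => ?_⟩
    · rw [smul_lie]; exact n.smul_mem c (h2 y hy)
    · rw [smul_lie, smul_lie]; exact n.smul_mem c (h3 z hz w hw)

section AuxA

variable (F : Type*) [Field F] {g : Type*} [LieRing g] [LieAlgebra F g]

lemma char2_add_self [CharP F 2] {M : Type*} [AddCommGroup M] [Module F M] (v : M) :
    v + v = 0 := by
  have h2 : (2 : F) = 0 := by exact_mod_cast CharP.cast_eq_zero F 2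
  rw [← two_smul F v, h2, zero_smul]

lemma char2_neg [CharP F 2] {M : Type*} [AddCommGroup M] [Module F M] (v : M) :
    -v = v :=
  neg_eq_of_add_eq_zero_left (char2_add_self F v)

variable {F} {t : LieSubalgebra F g}

lemma mem_rootSpace {lam : Module.Dual F t} {v : g} :
    v ∈ rootSpace t lam ↔ ∀ x : t, ⁅(x : g), v⁆ = lam x • v := Iff.rfl

lemma lie_mem_rootSpace {ξ η : Module.Dual F t} {x y : g}
    (hx : x ∈ rootSpace t ξ) (hy : y ∈ rootSpace t η) :
    ⁅x, y⁆ ∈ rootSpace t (ξ + η) := by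
  intro s
  rw [leibniz_lie, hx s, hy s, lie_smul, smul_lie, LinearMap.add_apply, add_smul]

lemma pmem_rootSpace {p : g → g} (hp : IsTwoMap F p) {ξ : Module.Dual F t} {x : g}
    (hx : x ∈ rootSpace t ξ) : p x ∈ rootSpace t (0 : Module.Dual F t) := by
  intro s
  have h1 : ⁅p x, (s : g)⁆ = ⁅x, ⁅x, (s : g)⁆⁆ := hp.ad_pow x s
  have h2 : ⁅x, (s : g)⁆ = -(ξ s • x) := by rw [← lie_skew, hx s]
  rw [h2, lie_neg, lie_smul, lie_self, smul_zero, neg_zero] at h1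
  rw [← lie_skew, h1, neg_zero, LinearMap.zero_apply, zero_smul]

lemma ad_nilpotent_of_iterate {p : g → g} (hp : IsTwoMap F p) :
    ∀ (k : ℕ) (m : g), p^[k] m = 0 → IsNilpotent (LieAlgebra.ad F g m) := by
  intro k
  induction k with
  | zero =>
    intro m hm
    simp only [Function.iterate_zero, id_eq] at hm
    exact ⟨1, by rw [pow_one, hm]; simp⟩
  | succ k ih =>
    intro m hm
    rw [Function.iterate_succ_apply] at hm
    obtain ⟨j, hj⟩ := ih (p m) hm
    have hsq : LieAlgebra.ad F g (p m) = (LieAlgebra.ad F g m) ^ 2 := by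
      ext v
      have := hp.ad_pow m v
      simpa [pow_two] using this
    exact ⟨2 * j, by rw [pow_mul, ← hsq, hj]⟩

lemma ad_nilpotent {p : g → g} (hp : IsTwoMap F p) {m : g} (hm : IsTwoNilpotent p m) :
    IsNilpotent (LieAlgebra.ad F g m) := by
  obtain ⟨k, hk⟩ := hm
  exact ad_nilpotent_of_iterate hp k m hk

lemma smul_one_add_nilpotent_injective {V : Type*} [AddCommGroup V] [Module F V]
    {c : F} (hc : c ≠ 0) {N : Module.End F V} (hN : IsNilpotent N) :
    Function.Injective (c • (1 : Module.End F V) + N) := by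
  have hu : IsUnit (c • (1 : Module.End F V)) := by
    have := (IsUnit.mk0 c hc).map (algebraMap F (Module.End F V))
    rwa [Algebra.algebraMap_eq_smul_one] at this
  have := hN.isUnit_add_left_of_commute hu ((Commute.one_right N).smul_right c)
  exact ((Module.End.isUnit_iff _).mp this).injective

lemma artin_schreier {F : Type*} [Field F] [IsAlgClosed F] (a b : F) :
    ∃ c : F, a * c ^ 2 + c + b = 0 := by
  by_cases ha : a = 0
  · exact ⟨-b, by rw [ha]; ring⟩
  · obtain ⟨c, hc⟩ := IsAlgClosed.exists_root
      (Polynomial.C a * Polynomial.X ^ 2 + Polynomial.C 1 * Polynomial.X + Polynomial.C b)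
      (by rw [Polynomial.degree_quadratic ha]; exact two_ne_zero)
    refine ⟨c, ?_⟩
    have := hc
    simp only [Polynomial.IsRoot, Polynomial.eval_add, Polynomial.eval_mul, Polynomial.eval_pow,
      Polynomial.eval_C, Polynomial.eval_X, one_mul] at this
    exact this

end AuxA

section AuxB

variable {F : Type*} [Field F] [CharP F 2] {g : Type*} [LieRing g] [LieAlgebra F g]
  [FiniteDimensional F g] {t : LieSubalgebra F g}

/-- Rank argument: if `dim g_{δ+ξ} < dim g_δ`, then for `z ∈ g_ξ` with `p z = s_z + m_z`,
the `δ`-value of the toral part vanishes. -/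
lemma rank_vanish {p : g → g} (hp : IsTwoMap F p) {ξ δ : Module.Dual F t}
    (hdim : Module.finrank F (rootSpace t (δ + ξ)) < Module.finrank F (rootSpace t δ))
    {z : g} (hz : z ∈ rootSpace t ξ) {sz : t} {mz : g}
    (hmznil : IsTwoNilpotent p mz) (hmz0 : mz ∈ rootSpace t (0 : Module.Dual F t))
    (hdecz : p z = ↑sz + mz) : δ sz = 0 := by
  by_contra hc
  have hid : ξ + (δ + ξ) = δ := by
    rw [add_comm δ ξ, ← add_assoc, char2_add_self F ξ, zero_add]
  -- the two bracket maps
  let L1 : rootSpace t δ →ₗ[F] rootSpace t (δ + ξ) :=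
    { toFun := fun v => ⟨⁅z, (v : g)⁆, by
        have := lie_mem_rootSpace hz v.2
        rwa [add_comm ξ δ] at this⟩
      map_add' := fun a b => by ext; simp [lie_add]
      map_smul' := fun c a => by ext; simp [lie_smul] }
  let L2 : rootSpace t (δ + ξ) →ₗ[F] rootSpace t δ :=
    { toFun := fun v => ⟨⁅z, (v : g)⁆, by
        have := lie_mem_rootSpace hz v.2
        rwa [hid] at this⟩
      map_add' := fun a b => by ext; simp [lie_add]
      map_smul' := fun c a => by ext; simp [lie_smul] }
  have hmaps : Set.MapsTo (LieAlgebra.ad F g mz) (rootSpace t δ) (rootSpace t δ) := by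
    intro v hv
    have := lie_mem_rootSpace hmz0 hv
    rwa [zero_add] at this
  let N : Module.End F (rootSpace t δ) := (LieAlgebra.ad F g mz).restrict hmaps
  have hNnil : IsNilpotent N :=
    Module.End.isNilpotent.restrict hmaps (ad_nilpotent hp hmznil)
  have hkey : ∀ v : rootSpace t δ, L2 (L1 v) = (δ sz • (1 : Module.End F (rootSpace t δ)) + N) v := by
    intro v
    ext
    show ⁅z, ⁅z, (v : g)⁆⁆ = _
    rw [← hp.ad_pow, hdecz, add_lie]
    have h1 : ⁅(↑sz : g), (v : g)⁆ = δ sz • (v : g) := v.2 sz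
    simp only [LinearMap.add_apply, LinearMap.smul_apply, Module.End.one_apply]
    rw [h1]
    rfl
  have hinj : Function.Injective (δ sz • (1 : Module.End F (rootSpace t δ)) + N) :=
    smul_one_add_nilpotent_injective hc hNnil
  have hL1inj : Function.Injective L1 := by
    intro a b hab
    apply hinj
    rw [← hkey, ← hkey, hab]
  have := LinearMap.finrank_le_finrank_of_injective hL1inj
  omega

/-- Uniqueness of the toral part in the decomposition `h = t ⊕ n`. -/
lemma tpart_unique {n : Submodule F g}
    (hdisj : Disjoint t.toSubmodule n) {s s' : t} {m m' : g}
    (hm : m ∈ n) (hm' : m' ∈ n) (h : (s : g) + m = (s' : g) + m') : s = s' := by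
  have hsub : (s : g) - (s' : g) = m' - m := by
    rw [sub_eq_sub_iff_add_eq_add, h, add_comm]
  have h1 : (s : g) - (s' : g) ∈ t.toSubmodule := sub_mem s.2 s'.2
  have h2 : (s : g) - (s' : g) ∈ n := hsub ▸ sub_mem hm' hm
  have := Submodule.disjoint_def.mp hdisj _ h1 h2
  rw [sub_eq_zero] at this
  exact Subtype.coe_injective this

/-- Polarization: if the `δ`-value of the toral part of `p z` vanishes for all `z ∈ g_ξ`,
then the `δ`-value of the toral part of any `⁅x,y⁆`, `x y ∈ g_ξ`, vanishes. -/
lemma polar_vanish {p : g → g} (hp : IsTwoMap F p) {n : Submodule F g}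
    (hdecomp : rootSpace t (0 : Module.Dual F t) = t.toSubmodule ⊔ n)
    (hdisj : Disjoint t.toSubmodule n) {ξ δ : Module.Dual F t}
    (hvan : ∀ z ∈ rootSpace t ξ, ∀ (sz : t) (mz : g), mz ∈ n → p z = ↑sz + mz → δ sz = 0)
    {x y : g} (hx : x ∈ rootSpace t ξ) (hy : y ∈ rootSpace t ξ)
    {s : t} {m : g} (hm : m ∈ n) (hxy : ⁅x, y⁆ = ↑s + m) : δ s = 0 := by
  have hdec : ∀ z ∈ rootSpace t ξ, ∃ (sz : t) (mz : g), mz ∈ n ∧ p z = ↑sz + mz := by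
    intro z hz
    have h0 : p z ∈ t.toSubmodule ⊔ n := by rw [← hdecomp]; exact pmem_rootSpace hp hz
    obtain ⟨a, ha, b, hb, hab⟩ := Submodule.mem_sup.mp h0
    exact ⟨⟨a, ha⟩, b, hb, hab.symm⟩
  obtain ⟨sx, mx, hmx, hpx⟩ := hdec x hx
  obtain ⟨sy, my, hmy, hpy⟩ := hdec y hy
  obtain ⟨sxy, mxy, hmxy, hpxy⟩ := hdec (x + y) ((rootSpace t ξ).add_mem hx hy)
  have hsum : p (x + y) = (↑(sx + sy + s) : g) + (mx + my + m) := by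
    rw [hp.add_pow, hpx, hpy, hxy]
    push_cast
    abel
  have huniq : sxy = sx + sy + s := tpart_unique hdisj hmxy (n.add_mem (n.add_mem hmx hmy) hm)
    (by rw [← hpxy, hsum])
  have h1 : δ sxy = 0 := hvan _ ((rootSpace t ξ).add_mem hx hy) _ _ hmxy hpxy
  have h2 : δ sx = 0 := hvan _ hx _ _ hmx hpx
  have h3 : δ sy = 0 := hvan _ hy _ _ hmy hpy
  rw [huniq] at h1
  simp only [map_add, h2, h3, zero_add] at h1
  exact h1

end AuxB

section AuxC

variable {F : Type*} [Field F] [CharP F 2] {g : Type*} [LieRing g] [LieAlgebra F g]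
  [FiniteDimensional F g] {t : LieSubalgebra F g}

/-- Engel-type core: if `x, y ∈ g_ξ` with normalized data (`ξ`-toral parts of `p x`, `p y`
vanish), and `⁅x,y⁆ = s + m` with `ξ s = 1`, we get a contradiction. -/
lemma engel_core {p : g → g} (hp : IsTwoMap F p) {n : Submodule F g}
    (hn : ∀ x : g, x ∈ n ↔ x ∈ rootSpace t (0 : Module.Dual F t) ∧ IsTwoNilpotent p x)
    (hstd : ∀ x ∈ rootSpace t (0 : Module.Dual F t), ∀ y ∈ n, ⁅x, y⁆ ∈ n)
    (hdisj : Disjoint t.toSubmodule n)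
    {ξ : Module.Dual F t} {x y : g} (hx : x ∈ rootSpace t ξ) (hy : y ∈ rootSpace t ξ)
    {s : t} {m : g} (hm : m ∈ n) (hxy : ⁅x, y⁆ = ↑s + m) (hξs : ξ s = 1)
    {sx : t} {mx : g} (hmx : mx ∈ n) (hpx : p x = ↑sx + mx) (hqx : ξ sx = 0)
    {sy : t} {my : g} (hmy : my ∈ n) (hpy : p y = ↑sy + my) (hqy : ξ sy = 0) :
    False := by
  classical
  have hc2g : ∀ v : g, v + v = 0 := char2_add_self F
  -- n as a Lie subalgebra
  let n' : LieSubalgebra F g :=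
    { toSubmodule := n
      lie_mem' := fun {a b} ha hb => hstd a ((hn a).mp ha).1 b hb }
  have hmemn' : ∀ z : g, z ∈ n' ↔ z ∈ n := fun z => Iff.rfl
  -- g_ξ as a Lie submodule over n'
  let W : LieSubmodule F n' g :=
    { toSubmodule := rootSpace t ξ
      lie_mem := by
        intro z v hv
        show ⁅(z : g), v⁆ ∈ rootSpace t ξ
        have hz0 : (z : g) ∈ rootSpace t (0 : Module.Dual F t) := ((hn z).mp z.2).1
        have := lie_mem_rootSpace hz0 hv
        rwa [zero_add] at this }
  have hWmem : ∀ v : g, v ∈ W ↔ v ∈ rootSpace t ξ := fun v => Iff.rfl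
  -- each element of n' acts nilpotently on W
  have hnilact : ∀ z : n', IsNilpotent (LieModule.toEnd F n' W z) := by
    intro z
    obtain ⟨K, hK⟩ := ad_nilpotent hp ((hn z).mp z.2).2
    refine ⟨K, ?_⟩
    ext w
    have hiter : ∀ (j : ℕ) (w : W),
        (((LieModule.toEnd F n' W z) ^ j) w : g) = ((LieAlgebra.ad F g (z : g)) ^ j) (w : g) := by
      intro j
      induction j with
      | zero => intro w; rfl
      | succ j ih =>
        intro w
        rw [pow_succ', pow_succ']
        have : ((LieModule.toEnd F n' W z) ((LieModule.toEnd F n' W z ^ j) w) : g)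
            = (LieAlgebra.ad F g (z : g)) (((LieModule.toEnd F n' W z ^ j) w : g)) := rfl
        rw [Module.End.mul_apply, Module.End.mul_apply, this, ih]
    have := hiter K w
    rw [hK] at this
    simpa using this
  -- Engel's theorem
  have hEng : LieModule.IsNilpotent n' W :=
    LieAlgebra.isEngelian_of_isNoetherian W hnilact
  obtain ⟨k, hk⟩ := (LieModule.isNilpotent_iff F n' W).mp hEng
  -- the two key identities
  have hidx : x = ⁅mx, y⁆ + ⁅m, x⁆ := by
    have h1 : ⁅p x, y⁆ = ⁅x, ⁅x, y⁆⁆ := hp.ad_pow x y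
    rw [hpx, add_lie, hxy, lie_add] at h1
    have h2 : ⁅(↑sx : g), y⁆ = (0 : F) • y := by rw [hy sx, hqx]
    have h3 : ⁅x, (↑s : g)⁆ = x := by
      rw [← lie_skew, hx s, hξs, one_smul, char2_neg F]
    rw [h2, zero_smul, zero_add, h3] at h1
    have h4 : ⁅x, m⁆ = ⁅m, x⁆ := by rw [← lie_skew, char2_neg F]
    rw [h4] at h1
    -- h1 : ⁅mx, y⁆ = x + ⁅m, x⁆
    have := congrArg (fun w => w + ⁅m, x⁆) h1
    simp only [add_assoc, hc2g, add_zero] at this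
    exact this.symm
  have hidy : y = ⁅my, x⁆ + ⁅m, y⁆ := by
    have h1 : ⁅p y, x⁆ = ⁅y, ⁅y, x⁆⁆ := hp.ad_pow y x
    have hyx : ⁅y, x⁆ = ↑s + m := by rw [← lie_skew, hxy, char2_neg F]
    rw [hpy, add_lie, hyx, lie_add] at h1
    have h2 : ⁅(↑sy : g), x⁆ = (0 : F) • x := by rw [hx sy, hqy]
    have h3 : ⁅y, (↑s : g)⁆ = y := by
      rw [← lie_skew, hy s, hξs, one_smul, char2_neg F]
    rw [h2, zero_smul, zero_add, h3] at h1
    have h4 : ⁅y, m⁆ = ⁅m, y⁆ := by rw [← lie_skew, char2_neg F]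
    rw [h4] at h1
    have := congrArg (fun w => w + ⁅m, y⁆) h1
    simp only [add_assoc, hc2g, add_zero] at this
    exact this.symm
  -- lift to W and run the lower central series induction
  set xw : W := ⟨x, hx⟩ with hxw
  set yw : W := ⟨y, hy⟩ with hyw
  have hmem : ∀ j, xw ∈ LieModule.lowerCentralSeries F n' W j ∧ yw ∈ LieModule.lowerCentralSeries F n' W j := by
    intro j
    induction j with
    | zero => exact ⟨LieSubmodule.mem_top _, LieSubmodule.mem_top _⟩
    | succ j ih =>
      rw [LieModule.lowerCentralSeries_succ]
      constructor
      · have : xw = ⁅(⟨mx, hmx⟩ : n'), yw⁆ + ⁅(⟨m, hm⟩ : n'), xw⁆ := by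
          apply Subtype.coe_injective
          exact hidx
        rw [this]
        exact add_mem (LieSubmodule.lie_mem_lie (LieSubmodule.mem_top _) ih.2)
          (LieSubmodule.lie_mem_lie (LieSubmodule.mem_top _) ih.1)
      · have : yw = ⁅(⟨my, hmy⟩ : n'), xw⁆ + ⁅(⟨m, hm⟩ : n'), yw⁆ := by
          apply Subtype.coe_injective
          exact hidy
        rw [this]
        exact add_mem (LieSubmodule.lie_mem_lie (LieSubmodule.mem_top _) ih.1)
          (LieSubmodule.lie_mem_lie (LieSubmodule.mem_top _) ih.2)
  have hx0 : x = 0 := by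
    have := (hmem k).1
    rw [hk, LieSubmodule.mem_bot] at this
    exact congrArg Subtype.val this
  -- contradiction: s + m = 0 forces s = 0, contradicting ξ s = 1
  have h0 : (↑s : g) + m = 0 := by rw [← hxy, hx0, zero_lie]
  have hs : (↑s : g) = m := by
    have := congrArg (fun w => w + m) h0
    simpa [add_assoc, hc2g] using this
  have hs0 : (↑s : g) = 0 := Submodule.disjoint_def.mp hdisj _ s.2 (hs ▸ hm)
  have : s = 0 := Subtype.coe_injective hs0
  rw [this, map_zero] at hξs
  exact one_ne_zero hξs.symm

end AuxC

section AuxD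

variable {F : Type*} [Field F] [IsAlgClosed F] [CharP F 2] {g : Type*} [LieRing g]
  [LieAlgebra F g] [FiniteDimensional F g] {t : LieSubalgebra F g}

/-- The `ξ`-value of the toral part of `⁅x, y⁆`, for `x, y ∈ g_ξ`, always vanishes. -/
lemma self_vanish {p : g → g} (hp : IsTwoMap F p) {n : Submodule F g}
    (hn : ∀ x : g, x ∈ n ↔ x ∈ rootSpace t (0 : Module.Dual F t) ∧ IsTwoNilpotent p x)
    (hstd : ∀ x ∈ rootSpace t (0 : Module.Dual F t), ∀ y ∈ n, ⁅x, y⁆ ∈ n)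
    (hdecomp : rootSpace t (0 : Module.Dual F t) = t.toSubmodule ⊔ n)
    (hdisj : Disjoint t.toSubmodule n)
    {ξ : Module.Dual F t} {x y : g} (hx : x ∈ rootSpace t ξ) (hy : y ∈ rootSpace t ξ)
    {s : t} {m : g} (hm : m ∈ n) (hxy : ⁅x, y⁆ = ↑s + m) : ξ s = 0 := by
  have hc2g : ∀ v : g, v + v = 0 := char2_add_self F
  have hcoesmul : ∀ (a : F) (u : t), ((a • u : t) : g) = a • (u : g) := fun _ _ => rfl
  have hcoeadd : ∀ (u v : t), ((u + v : t) : g) = (u : g) + (v : g) := fun _ _ => rfl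
  have hdec : ∀ z ∈ rootSpace t ξ, ∃ (sz : t) (mz : g), mz ∈ n ∧ p z = ↑sz + mz := by
    intro z hz
    have h0 : p z ∈ t.toSubmodule ⊔ n := by rw [← hdecomp]; exact pmem_rootSpace hp hz
    obtain ⟨a, ha, b, hb, hab⟩ := Submodule.mem_sup.mp h0
    exact ⟨⟨a, ha⟩, b, hb, hab.symm⟩
  by_contra hc
  -- rescale x so that ξ s = 1
  set c := ξ s with hcdef
  set x₁ : g := c⁻¹ • x with hx₁def
  have hx₁ : x₁ ∈ rootSpace t ξ := (rootSpace t ξ).smul_mem _ hx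
  set s₁ : t := c⁻¹ • s with hs₁def
  set m₁ : g := c⁻¹ • m with hm₁def
  have hm₁ : m₁ ∈ n := n.smul_mem _ hm
  have hxy₁ : ⁅x₁, y⁆ = ↑s₁ + m₁ := by
    rw [hx₁def, smul_lie, hxy, smul_add, hs₁def, hm₁def]
    norm_cast
  have hξs₁ : ξ s₁ = 1 := by
    rw [hs₁def, map_smul, smul_eq_mul, ← hcdef, inv_mul_cancel₀ hc]
  -- decompose p x₁ and p y
  obtain ⟨sx, mx, hmx, hpx⟩ := hdec x₁ hx₁
  obtain ⟨sy, my, hmy, hpy⟩ := hdec y hy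
  -- adjust y to kill the ξ-part of the toral part of its 2-power
  obtain ⟨c₂, hc₂⟩ := artin_schreier (ξ sx) (ξ sy)
  set y' : g := y + c₂ • x₁ with hy'def
  have hy' : y' ∈ rootSpace t ξ := (rootSpace t ξ).add_mem hy ((rootSpace t ξ).smul_mem _ hx₁)
  have hyx₁ : ⁅y, x₁⁆ = ↑s₁ + m₁ := by rw [← lie_skew, hxy₁, char2_neg F]
  have hpy' : p y' = ↑(sy + c₂ ^ 2 • sx + c₂ • s₁) + (my + c₂ ^ 2 • mx + c₂ • m₁) := by
    rw [hy'def, hp.add_pow, hpy, hp.smul_pow, hpx, lie_smul, hyx₁]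
    simp only [hcoeadd, hcoesmul]
    rw [smul_add, smul_add]
    abel
  have hqy' : ξ (sy + c₂ ^ 2 • sx + c₂ • s₁) = 0 := by
    simp only [map_add, map_smul, smul_eq_mul, hξs₁, mul_one]
    calc ξ sy + c₂ ^ 2 * ξ sx + c₂ = ξ sx * c₂ ^ 2 + c₂ + ξ sy := by ring
    _ = 0 := hc₂
  have hxy' : ⁅x₁, y'⁆ = ↑s₁ + m₁ := by
    rw [hy'def, lie_add, lie_smul, lie_self, smul_zero, add_zero, hxy₁]
  -- adjust x to kill the ξ-part of the toral part of its 2-power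
  set d := ξ sx with hddef
  set x' : g := x₁ + d • y' with hx'def
  have hx' : x' ∈ rootSpace t ξ := (rootSpace t ξ).add_mem hx₁ ((rootSpace t ξ).smul_mem _ hy')
  have hpx' : p x' = ↑(sx + d ^ 2 • (sy + c₂ ^ 2 • sx + c₂ • s₁) + d • s₁)
      + (mx + d ^ 2 • (my + c₂ ^ 2 • mx + c₂ • m₁) + d • m₁) := by
    rw [hx'def, hp.add_pow, hpx, hp.smul_pow, hpy', lie_smul, hxy']
    simp only [hcoeadd, hcoesmul, smul_add]
    abel
  have hqx' : ξ (sx + d ^ 2 • (sy + c₂ ^ 2 • sx + c₂ • s₁) + d • s₁) = 0 := by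
    simp only [map_add, map_smul, smul_eq_mul, hξs₁, mul_one]
    have h1 : ξ sy + c₂ ^ 2 * ξ sx + c₂ = 0 := by
      have := hqy'
      simpa [map_add, map_smul, smul_eq_mul, hξs₁, mul_one] using this
    rw [← hddef]
    calc d + d ^ 2 * (ξ sy + c₂ ^ 2 * ξ sx + c₂) + d = d ^ 2 * (ξ sy + c₂ ^ 2 * ξ sx + c₂)
          + (d + d) := by ring
    _ = 0 := by rw [h1, char2_add_self F d, mul_zero, add_zero]
  have hx'y' : ⁅x', y'⁆ = ↑s₁ + m₁ := by
    rw [hx'def, add_lie, hxy', smul_lie, lie_self, smul_zero, add_zero]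
  -- apply the Engel core lemma
  exact engel_core hp hn hstd hdisj hx' hy' hm₁ hx'y' hξs₁
    (n.add_mem (n.add_mem hmx (n.smul_mem _ (n.add_mem (n.add_mem hmy (n.smul_mem _ hmx))
      (n.smul_mem _ hm₁)))) (n.smul_mem _ hm₁)) hpx' hqx'
    (n.add_mem (n.add_mem hmy (n.smul_mem _ hmx)) (n.smul_mem _ hm₁)) hpy' hqy'

end AuxD

set_option maxHeartbeats 1600000 in
/-- Case B with `dim g_α = dim g_β = dim g_γ > dim g_ξ` for each
`ξ ∈ {α+β, α+γ, β+γ, α+β+γ}`: `span{t1 + t2, t1 + t3} ⊕ n ⊕ ⊕_{ξ∈Δ} g_ξ`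
is an ideal of `g`. -/
theorem statement14
    {F : Type*} [Field F] [IsAlgClosed F] [CharP F 2]
    {g : Type*} [LieRing g] [LieAlgebra F g] [FiniteDimensional F g]
    (p : g → g) (hp : IsTwoMap F p)
    (hcenter : LieAlgebra.center F g = ⊥)
    (t : LieSubalgebra F g) (hmax : IsMaxTorus F p t)
    (n : Submodule F g)
    (hn : ∀ x : g, x ∈ n ↔ x ∈ rootSpace t 0 ∧ IsTwoNilpotent p x)
    (hstd : ∀ x ∈ rootSpace t 0, ∀ y ∈ n, ⁅x, y⁆ ∈ n)
    (hdecomp : rootSpace t 0 = t.toSubmodule ⊔ n)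
    (hdisj : Disjoint t.toSubmodule n)
    (hrank : ∀ s : LieSubalgebra F g, IsTorus F p s → Module.finrank F s ≤ 3)
    (hdimt : Module.finrank F t = 3)
    (t₁ t₂ t₃ : t)
    (htor1 : p (t₁ : g) = (t₁ : g)) (htor2 : p (t₂ : g) = (t₂ : g))
    (htor3 : p (t₃ : g) = (t₃ : g))
    (hspan : Submodule.span F ({t₁, t₂, t₃} : Set t) = ⊤)
    (α β γ : Module.Dual F t)
    (hα : α t₁ = 1 ∧ α t₂ = 0 ∧ α t₃ = 0)
    (hβ : β t₁ = 0 ∧ β t₂ = 1 ∧ β t₃ = 0)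
    (hγ : γ t₁ = 0 ∧ γ t₂ = 0 ∧ γ t₃ = 1)
    (hroots : rootSet t = ({α, β, γ, α + β, α + γ, β + γ, α + β + γ} :
      Set (Module.Dual F t)))
    (h1 : Module.finrank F (rootSpace t α) = Module.finrank F (rootSpace t β))
    (h2 : Module.finrank F (rootSpace t β) = Module.finrank F (rootSpace t γ))
    (h3 : ∀ ξ : Module.Dual F t,
      ξ = α + β ∨ ξ = α + γ ∨ ξ = β + γ ∨ ξ = α + β + γ →
      Module.finrank F (rootSpace t ξ) < Module.finrank F (rootSpace t γ)) :
    ∀ x y : g,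
      y ∈ Submodule.span F ({(t₁ : g) + (t₂ : g), (t₁ : g) + (t₃ : g)} : Set g) ⊔ n ⊔
          (⨆ ξ ∈ rootSet t, rootSpace t ξ) →
      ⁅x, y⁆ ∈ Submodule.span F ({(t₁ : g) + (t₂ : g), (t₁ : g) + (t₃ : g)} : Set g) ⊔ n ⊔
          (⨆ ξ ∈ rootSet t, rootSpace t ξ) := by
  intro x y hy
  classical
  set T := Submodule.span F ({(t₁ : g) + (t₂ : g), (t₁ : g) + (t₃ : g)} : Set g) ⊔ n ⊔
      (⨆ ξ ∈ rootSet t, rootSpace t ξ) with hTdef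
  have h2F : (2 : F) = 0 := by exact_mod_cast CharP.cast_eq_zero F 2
  have hc2g : ∀ v : g, v + v = 0 := char2_add_self F
  -- basic membership facts for T
  have hTroot : ∀ ξ ∈ rootSet t, rootSpace t ξ ≤ T := by
    intro ξ hξ
    exact le_sup_of_le_right (le_iSup₂ (f := fun ξ (_ : ξ ∈ rootSet t) => rootSpace t ξ) ξ hξ)
  have hTn : n ≤ T := le_sup_of_le_left le_sup_right
  have hTspan : Submodule.span F ({(t₁ : g) + (t₂ : g), (t₁ : g) + (t₃ : g)} : Set g) ≤ T :=
    le_sup_of_le_left le_sup_left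
  -- basic facts about the Cartan decomposition
  have htle : t.toSubmodule ≤ rootSpace t (0 : Module.Dual F t) := by
    rw [hdecomp]; exact le_sup_left
  have hnle : n ≤ rootSpace t (0 : Module.Dual F t) := by
    rw [hdecomp]; exact le_sup_right
  have hzero : ∀ v ∈ rootSpace t (0 : Module.Dual F t), ∀ s : t, ⁅(s : g), v⁆ = 0 := by
    intro v hv s
    rw [hv s, LinearMap.zero_apply, zero_smul]
  have habelian : ∀ a b : t, ⁅(a : g), (b : g)⁆ = 0 := fun a b => hzero _ (htle b.2) a
  -- the span criterion
  have hμspan : ∀ s : t, α s + β s + γ s = 0 →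
      (s : g) ∈ Submodule.span F ({(t₁ : g) + (t₂ : g), (t₁ : g) + (t₃ : g)} : Set g) := by
    intro s hs
    have hsmem : s ∈ Submodule.span F ({t₁, t₂, t₃} : Set t) := by rw [hspan]; trivial
    rw [Submodule.mem_span_insert] at hsmem
    obtain ⟨a, z, hz, hsz⟩ := hsmem
    rw [Submodule.mem_span_insert] at hz
    obtain ⟨b, w, hw, hzw⟩ := hz
    rw [Submodule.mem_span_singleton] at hw
    obtain ⟨c, hc⟩ := hw
    have hsabc : s = a • t₁ + b • t₂ + c • t₃ := by rw [hsz, hzw, ← hc]; abel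
    have hαs : α s = a := by
      rw [hsabc]
      simp [map_add, map_smul, hα.1, hα.2.1, hα.2.2, smul_eq_mul]
    have hβs : β s = b := by
      rw [hsabc]
      simp [map_add, map_smul, hβ.1, hβ.2.1, hβ.2.2, smul_eq_mul]
    have hγs : γ s = c := by
      rw [hsabc]
      simp [map_add, map_smul, hγ.1, hγ.2.1, hγ.2.2, smul_eq_mul]
    rw [hαs, hβs, hγs] at hs
    have hc' : c = a + b := by linear_combination hs - (a + b) * h2F
    have hcoe : (s : g) = a • ((t₁ : g) + (t₃ : g)) + b • ((t₂ : g) + (t₃ : g)) := by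
      have : ((a • t₁ + b • t₂ + c • t₃ : t) : g)
          = a • (t₁ : g) + b • (t₂ : g) + c • (t₃ : g) := rfl
      rw [hsabc, this, hc']
      rw [smul_add, smul_add, add_smul]
      abel
    have h23 : (t₂ : g) + (t₃ : g) = ((t₁ : g) + (t₂ : g)) + ((t₁ : g) + (t₃ : g)) := by
      rw [show ((t₁ : g) + (t₂ : g)) + ((t₁ : g) + (t₃ : g))
          = ((t₁ : g) + (t₁ : g)) + ((t₂ : g) + (t₃ : g)) from by abel, hc2g, zero_add]
    rw [hcoe, h23]
    have hm1 : ((t₁ : g) + (t₂ : g)) ∈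
        Submodule.span F ({(t₁ : g) + (t₂ : g), (t₁ : g) + (t₃ : g)} : Set g) :=
      Submodule.subset_span (Set.mem_insert _ _)
    have hm2 : ((t₁ : g) + (t₃ : g)) ∈
        Submodule.span F ({(t₁ : g) + (t₂ : g), (t₁ : g) + (t₃ : g)} : Set g) :=
      Submodule.subset_span (Set.mem_insert_of_mem _ rfl)
    exact add_mem (Submodule.smul_mem _ a hm2) (Submodule.smul_mem _ b (add_mem hm1 hm2))
  -- the hard case: brackets within a single root space
  have hard : ∀ ξ ∈ rootSet t, ∀ x' ∈ rootSpace t ξ, ∀ y' ∈ rootSpace t ξ, ⁅x', y'⁆ ∈ T := by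
    intro ξ hξ x' hx' y' hy'
    have h0 : ⁅x', y'⁆ ∈ rootSpace t (0 : Module.Dual F t) := by
      have := lie_mem_rootSpace hx' hy'
      rwa [char2_add_self F ξ] at this
    have h0' : ⁅x', y'⁆ ∈ t.toSubmodule ⊔ n := by rw [← hdecomp]; exact h0
    obtain ⟨a, ha, m, hm, ham⟩ := Submodule.mem_sup.mp h0'
    set s : t := ⟨a, ha⟩ with hsdef
    have hxy : ⁅x', y'⁆ = ↑s + m := ham.symm
    have hself : ξ s = 0 := self_vanish hp hn hstd hdecomp hdisj hx' hy' hm hxy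
    have hvan : ∀ δ : Module.Dual F t,
        Module.finrank F (rootSpace t (δ + ξ)) < Module.finrank F (rootSpace t δ) →
        δ s = 0 := by
      intro δ hdim
      exact polar_vanish hp hdecomp hdisj
        (fun z hz sz mz hmz hpz =>
          rank_vanish hp hdim hz ((hn mz).mp hmz).2 (hnle hmz) hpz)
        hx' hy' hm hxy
    have hμ : α s + β s + γ s = 0 := by
      rw [hroots] at hξ
      simp only [Set.mem_insert_iff, Set.mem_singleton_iff] at hξ
      rcases hξ with h | h | h | h | h | h | h <;> rw [h] at hself hvan
      · have hβ0 : β s = 0 := hvan β (by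
          rw [add_comm β α, h2]
          exact h3 (α + β) (Or.inl rfl))
        have hγ0 : γ s = 0 := hvan γ (by
          rw [add_comm γ α]
          exact h3 (α + γ) (Or.inr (Or.inl rfl)))
        rw [hself, hβ0, hγ0, add_zero, add_zero]
      · have hα0 : α s = 0 := hvan α (by
          rw [h1, h2]
          exact h3 (α + β) (Or.inl rfl))
        have hγ0 : γ s = 0 := hvan γ (by
          rw [add_comm γ β]
          exact h3 (β + γ) (Or.inr (Or.inr (Or.inl rfl))))
        rw [hself, hα0, hγ0, add_zero, zero_add]
      · have hα0 : α s = 0 := hvan α (by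
          rw [h1, h2]
          exact h3 (α + γ) (Or.inr (Or.inl rfl)))
        have hβ0 : β s = 0 := hvan β (by
          rw [h2]
          exact h3 (β + γ) (Or.inr (Or.inr (Or.inl rfl))))
        rw [hself, hα0, hβ0, zero_add, zero_add]
      · have hγ0 : γ s = 0 := hvan γ (by
          rw [show γ + (α + β) = α + β + γ from by abel]
          exact h3 (α + β + γ) (Or.inr (Or.inr (Or.inr rfl))))
        have hab : α s + β s = 0 := hself
        rw [add_assoc] at *
        linear_combination hab + hγ0
      · have hβ0 : β s = 0 := hvan β (by
          rw [show β + (α + γ) = α + β + γ from by abel, h2]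
          exact h3 (α + β + γ) (Or.inr (Or.inr (Or.inr rfl))))
        have hac : α s + γ s = 0 := hself
        linear_combination hac + hβ0
      · have hα0 : α s = 0 := hvan α (by
          rw [show α + (β + γ) = α + β + γ from by abel, h1, h2]
          exact h3 (α + β + γ) (Or.inr (Or.inr (Or.inr rfl))))
        have hbc : β s + γ s = 0 := hself
        linear_combination hbc + hα0
      · have habc : α s + β s + γ s = 0 := hself
        exact habc
    rw [hxy]
    exact add_mem (hTspan (hμspan s hμ)) (hTn hm)
  -- arithmetic of the seven roots
  have hsum7 : ∀ ξ' η' : Module.Dual F t,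
      ξ' ∈ ({α, β, γ, α + β, α + γ, β + γ, α + β + γ} : Set (Module.Dual F t)) →
      η' ∈ ({α, β, γ, α + β, α + γ, β + γ, α + β + γ} : Set (Module.Dual F t)) →
      ξ' ≠ η' →
      ξ' + η' ∈ ({α, β, γ, α + β, α + γ, β + γ, α + β + γ} : Set (Module.Dual F t)) := by
    have hrep : ∀ δ ∈ ({α, β, γ, α + β, α + γ, β + γ, α + β + γ} : Set (Module.Dual F t)),
        ∃ c₁ c₂ c₃ : F, (c₁ = 0 ∨ c₁ = 1) ∧ (c₂ = 0 ∨ c₂ = 1) ∧ (c₃ = 0 ∨ c₃ = 1) ∧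
          ¬(c₁ = 0 ∧ c₂ = 0 ∧ c₃ = 0) ∧ δ = c₁ • α + c₂ • β + c₃ • γ := by
      intro δ hδ
      simp only [Set.mem_insert_iff, Set.mem_singleton_iff] at hδ
      rcases hδ with rfl | rfl | rfl | rfl | rfl | rfl | rfl
      · exact ⟨1, 0, 0, Or.inr rfl, Or.inl rfl, Or.inl rfl, by simp, by simp⟩
      · exact ⟨0, 1, 0, Or.inl rfl, Or.inr rfl, Or.inl rfl, by simp, by simp⟩
      · exact ⟨0, 0, 1, Or.inl rfl, Or.inl rfl, Or.inr rfl, by simp, by simp⟩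
      · exact ⟨1, 1, 0, Or.inr rfl, Or.inr rfl, Or.inl rfl, by simp, by simp⟩
      · exact ⟨1, 0, 1, Or.inr rfl, Or.inl rfl, Or.inr rfl, by simp, by simp⟩
      · exact ⟨0, 1, 1, Or.inl rfl, Or.inr rfl, Or.inr rfl, by simp, by simp⟩
      · exact ⟨1, 1, 1, Or.inr rfl, Or.inr rfl, Or.inr rfl, by simp, by simp⟩
    have hrecog : ∀ c₁ c₂ c₃ : F, (c₁ = 0 ∨ c₁ = 1) → (c₂ = 0 ∨ c₂ = 1) → (c₃ = 0 ∨ c₃ = 1) →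
        ¬(c₁ = 0 ∧ c₂ = 0 ∧ c₃ = 0) →
        c₁ • α + c₂ • β + c₃ • γ ∈
          ({α, β, γ, α + β, α + γ, β + γ, α + β + γ} : Set (Module.Dual F t)) := by
      rintro c₁ c₂ c₃ (rfl | rfl) (rfl | rfl) (rfl | rfl) hne
      · exact absurd ⟨rfl, rfl, rfl⟩ hne
      all_goals
        simp only [zero_smul, one_smul, zero_add, add_zero, Set.mem_insert_iff,
          Set.mem_singleton_iff, eq_self_iff_true, true_or, or_true]
    have hbool : ∀ a b : F, (a = 0 ∨ a = 1) → (b = 0 ∨ b = 1) → (a + b = 0 ∨ a + b = 1) := by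
      rintro a b (rfl | rfl) (rfl | rfl) <;> simp [one_add_one_eq_two, h2F]
    intro ξ' η' hξ' hη' hne
    obtain ⟨c₁, c₂, c₃, hc₁, hc₂, hc₃, hcne, hcrep⟩ := hrep ξ' hξ'
    obtain ⟨d₁, d₂, d₃, hd₁, hd₂, hd₃, hdne, hdrep⟩ := hrep η' hη'
    have hadd : ξ' + η' = (c₁ + d₁) • α + (c₂ + d₂) • β + (c₃ + d₃) • γ := by
      rw [hcrep, hdrep]
      module
    rw [hadd]
    apply hrecog _ _ _ (hbool _ _ hc₁ hd₁) (hbool _ _ hc₂ hd₂) (hbool _ _ hc₃ hd₃)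
    rintro ⟨e₁, e₂, e₃⟩
    have k₁ : c₁ = d₁ := by linear_combination e₁ - d₁ * h2F
    have k₂ : c₂ = d₂ := by linear_combination e₂ - d₂ * h2F
    have k₃ : c₃ = d₃ := by linear_combination e₃ - d₃ * h2F
    exact hne (by rw [hcrep, hdrep, k₁, k₂, k₃])
  -- reduction to generators of T
  have hgen : ∀ x' : g,
      (∀ s : t, ⁅x', (s : g)⁆ ∈ T) →
      (∀ m ∈ n, ⁅x', m⁆ ∈ T) →
      (∀ ξ ∈ rootSet t, ∀ v ∈ rootSpace t ξ, ⁅x', v⁆ ∈ T) →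
      ∀ y' ∈ T, ⁅x', y'⁆ ∈ T := by
    intro x' hs hm hroot y' hy'
    let M : Submodule F g :=
      { carrier := {w : g | ⁅x', w⁆ ∈ T}
        add_mem' := fun {u v} hu hv => by
          simp only [Set.mem_setOf_eq] at *
          rw [lie_add]
          exact T.add_mem hu hv
        zero_mem' := by
          simp only [Set.mem_setOf_eq, lie_zero]
          exact T.zero_mem
        smul_mem' := fun c u hu => by
          simp only [Set.mem_setOf_eq] at *
          rw [lie_smul]
          exact T.smul_mem c hu }
    have hle : T ≤ M := by
      refine sup_le (sup_le ?_ ?_) ?_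
      · rw [Submodule.span_le]
        rintro w hw
        simp only [Set.mem_insert_iff, Set.mem_singleton_iff] at hw
        rcases hw with rfl | rfl
        · have : ((t₁ + t₂ : t) : g) = (t₁ : g) + (t₂ : g) := rfl
          show ⁅x', (t₁ : g) + (t₂ : g)⁆ ∈ T
          rw [← this]
          exact hs (t₁ + t₂)
        · have : ((t₁ + t₃ : t) : g) = (t₁ : g) + (t₃ : g) := rfl
          show ⁅x', (t₁ : g) + (t₃ : g)⁆ ∈ T
          rw [← this]
          exact hs (t₁ + t₃)
      · intro w hw
        exact hm w hw
      · refine iSup_le fun ξ => iSup_le fun hξ => ?_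
        intro w hw
        exact hroot ξ hξ w hw
    exact hle hy'
  -- bracket with elements of the zero root space
  have hbr0 : ∀ x' ∈ rootSpace t (0 : Module.Dual F t), ∀ y' ∈ T, ⁅x', y'⁆ ∈ T := by
    intro x' hx'
    refine hgen x' ?_ ?_ ?_
    · intro s
      rw [← lie_skew, hzero x' hx' s, neg_zero]
      exact T.zero_mem
    · intro m hm
      exact hTn (hstd x' hx' m hm)
    · intro ξ hξ v hv
      have := lie_mem_rootSpace hx' hv
      rw [zero_add] at this
      exact hTroot ξ hξ this
  -- bracket with root vectors
  have hbrξ : ∀ ξ ∈ rootSet t, ∀ x' ∈ rootSpace t ξ, ∀ y' ∈ T, ⁅x', y'⁆ ∈ T := by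
    intro ξ hξ x' hx'
    refine hgen x' ?_ ?_ ?_
    · intro s
      rw [← lie_skew, hx' s]
      exact hTroot ξ hξ (neg_mem ((rootSpace t ξ).smul_mem _ hx'))
    · intro m hm
      have := lie_mem_rootSpace (hnle hm) hx'
      rw [zero_add] at this
      rw [← lie_skew]
      exact hTroot ξ hξ (neg_mem this)
    · intro η hη v hv
      by_cases he : ξ = η
      · subst he
        exact hard ξ hξ x' hx' v hv
      · have hsmem : ξ + η ∈ rootSet t := by
          rw [hroots] at hξ hη ⊢
          exact hsum7 ξ η hξ hη he
        exact hTroot _ hsmem (lie_mem_rootSpace hx' hv)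
  -- eigenvector criterion
  have heig : ∀ (c₁ c₂ c₃ : F) (v : g), ⁅(t₁ : g), v⁆ = c₁ • v → ⁅(t₂ : g), v⁆ = c₂ • v →
      ⁅(t₃ : g), v⁆ = c₃ • v → v ∈ rootSpace t (c₁ • α + c₂ • β + c₃ • γ) := by
    intro c₁ c₂ c₃ v hv1 hv2 hv3
    let K : Submodule F t :=
      { carrier := {u : t | ⁅(u : g), v⁆ = (c₁ • α + c₂ • β + c₃ • γ) u • v}
        add_mem' := fun {u w} hu hw => by
          simp only [Set.mem_setOf_eq] at *
          have hc : ((u + w : t) : g) = (u : g) + (w : g) := rfl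
          rw [hc, add_lie, hu, hw, map_add, add_smul]
        zero_mem' := by
          simp only [Set.mem_setOf_eq]
          have hc : ((0 : t) : g) = 0 := rfl
          rw [hc, zero_lie, map_zero, zero_smul]
        smul_mem' := fun c u hu => by
          simp only [Set.mem_setOf_eq] at *
          have hc : ((c • u : t) : g) = c • (u : g) := rfl
          rw [hc, smul_lie, hu, map_smul, smul_assoc] }
    have hKt : ∀ u ∈ ({t₁, t₂, t₃} : Set t), u ∈ K := by
      rintro u hu
      simp only [Set.mem_insert_iff, Set.mem_singleton_iff] at hu
      rcases hu with h | h | h <;> rw [h]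
      · show ⁅(t₁ : g), v⁆ = _ • v
        rw [hv1]
        congr 1
        simp only [LinearMap.add_apply, LinearMap.smul_apply, smul_eq_mul,
          hα.1, hβ.1, hγ.1, mul_one, mul_zero, add_zero]
      · show ⁅(t₂ : g), v⁆ = _ • v
        rw [hv2]
        congr 1
        simp only [LinearMap.add_apply, LinearMap.smul_apply, smul_eq_mul,
          hα.2.1, hβ.2.1, hγ.2.1, mul_one, mul_zero, add_zero, zero_add]
      · show ⁅(t₃ : g), v⁆ = _ • v
        rw [hv3]
        congr 1
        simp only [LinearMap.add_apply, LinearMap.smul_apply, smul_eq_mul,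
          hα.2.2, hβ.2.2, hγ.2.2, mul_one, mul_zero, add_zero, zero_add]
    have hKle : Submodule.span F ({t₁, t₂, t₃} : Set t) ≤ K := Submodule.span_le.mpr hKt
    rw [hspan] at hKle
    exact fun u => hKle (Submodule.mem_top (x := u))
  -- splitting by an idempotent operator
  have hsplit : ∀ e : g → g, (∀ a b : g, e (a + b) = e a + e b) → (∀ v, e (e v) = e v) →
      ∀ Q : g → Prop, (∀ a b, Q a → Q b → Q (a + b)) → (∀ v, Q v → Q (e v)) →
      ∀ v, Q v → ∃ v₀ v₁ : g, v = v₀ + v₁ ∧ e v₀ = 0 ∧ e v₁ = v₁ ∧ Q v₀ ∧ Q v₁ := by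
    intro e headd hidem Q hQadd hQe v hQv
    refine ⟨v + e v, e v, ?_, ?_, hidem v, hQadd _ _ hQv (hQe _ hQv), hQe _ hQv⟩
    · rw [add_assoc, hc2g, add_zero]
    · rw [headd, hidem, hc2g]
  -- the three commuting idempotent operators
  set e₁ : g → g := fun v => ⁅(t₁ : g), v⁆ with he₁
  set e₂ : g → g := fun v => ⁅(t₂ : g), v⁆ with he₂
  set e₃ : g → g := fun v => ⁅(t₃ : g), v⁆ with he₃
  have hadd1 : ∀ a b : g, e₁ (a + b) = e₁ a + e₁ b := fun a b => lie_add _ a b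
  have hadd2 : ∀ a b : g, e₂ (a + b) = e₂ a + e₂ b := fun a b => lie_add _ a b
  have hadd3 : ∀ a b : g, e₃ (a + b) = e₃ a + e₃ b := fun a b => lie_add _ a b
  have hid1 : ∀ v, e₁ (e₁ v) = e₁ v := by
    intro v
    have := hp.ad_pow (t₁ : g) v
    rw [htor1] at this
    exact this.symm
  have hid2 : ∀ v, e₂ (e₂ v) = e₂ v := by
    intro v
    have := hp.ad_pow (t₂ : g) v
    rw [htor2] at this
    exact this.symm
  have hid3 : ∀ v, e₃ (e₃ v) = e₃ v := by
    intro v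
    have := hp.ad_pow (t₃ : g) v
    rw [htor3] at this
    exact this.symm
  have hcomm : ∀ (a b : t) (v : g), ⁅(a : g), ⁅(b : g), v⁆⁆ = ⁅(b : g), ⁅(a : g), v⁆⁆ := by
    intro a b v
    rw [leibniz_lie, habelian a b, zero_lie, zero_add]
  -- handle a fully split piece
  have hfin : ∀ (c₁ c₂ c₃ : F) (w : g), (c₁ = 0 ∨ c₁ = 1) → (c₂ = 0 ∨ c₂ = 1) →
      (c₃ = 0 ∨ c₃ = 1) →
      ⁅(t₁ : g), w⁆ = c₁ • w → ⁅(t₂ : g), w⁆ = c₂ • w → ⁅(t₃ : g), w⁆ = c₃ • w →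
      ⁅w, y⁆ ∈ T := by
    intro c₁ c₂ c₃ w hb₁ hb₂ hb₃ hw1 hw2 hw3
    have hwmem := heig c₁ c₂ c₃ w hw1 hw2 hw3
    by_cases hzero : c₁ = 0 ∧ c₂ = 0 ∧ c₃ = 0
    · obtain ⟨rfl, rfl, rfl⟩ := hzero
      have : (0 : F) • α + (0 : F) • β + (0 : F) • γ = 0 := by
        simp only [zero_smul, add_zero]
      rw [this] at hwmem
      exact hbr0 w hwmem y hy
    · have hmem7 : c₁ • α + c₂ • β + c₃ • γ ∈ rootSet t := by
        rw [hroots]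
        rcases hb₁ with rfl | rfl <;> rcases hb₂ with rfl | rfl <;> rcases hb₃ with rfl | rfl
        · exact absurd ⟨rfl, rfl, rfl⟩ hzero
        all_goals
          simp only [zero_smul, one_smul, zero_add, add_zero, Set.mem_insert_iff,
            Set.mem_singleton_iff, eq_self_iff_true, true_or, or_true]
      exact hbrξ _ hmem7 w hwmem y hy
  -- now decompose x
  obtain ⟨a₀, a₁, hxa, ha₀, ha₁, -, -⟩ :=
    hsplit e₁ hadd1 hid1 (fun _ => True) (fun _ _ _ _ => trivial) (fun _ _ => trivial) x trivial
  have hQ0add : ∀ a b : g, e₁ a = 0 → e₁ b = 0 → e₁ (a + b) = 0 := fun a b ha hb => by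
    rw [hadd1, ha, hb, add_zero]
  have hQ0e2 : ∀ v : g, e₁ v = 0 → e₁ (e₂ v) = 0 := fun v hv => by
    show ⁅(t₁ : g), ⁅(t₂ : g), v⁆⁆ = 0
    rw [hcomm t₁ t₂ v]
    show e₂ (e₁ v) = 0
    rw [hv]
    exact lie_zero _
  have hQ1add : ∀ a b : g, e₁ a = a → e₁ b = b → e₁ (a + b) = a + b := fun a b ha hb => by
    rw [hadd1, ha, hb]
  have hQ1e2 : ∀ v : g, e₁ v = v → e₁ (e₂ v) = e₂ v := fun v hv => by
    show ⁅(t₁ : g), ⁅(t₂ : g), v⁆⁆ = _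
    rw [hcomm t₁ t₂ v]
    show e₂ (e₁ v) = e₂ v
    rw [hv]
  obtain ⟨b₀₀, b₀₁, ha₀b, hb₀₀, hb₀₁, hb₀₀q, hb₀₁q⟩ :=
    hsplit e₂ hadd2 hid2 (fun w => e₁ w = 0) hQ0add hQ0e2 a₀ ha₀
  obtain ⟨b₁₀, b₁₁, ha₁b, hb₁₀, hb₁₁, hb₁₀q, hb₁₁q⟩ :=
    hsplit e₂ hadd2 hid2 (fun w => e₁ w = w) hQ1add hQ1e2 a₁ ha₁
  -- third splitting, preserving both previous eigenequations
  have hsplit3 : ∀ (c₁ c₂ : F), (c₁ = 0 ∨ c₁ = 1) → (c₂ = 0 ∨ c₂ = 1) → ∀ w : g,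
      e₁ w = c₁ • w → e₂ w = c₂ • w → ⁅w, y⁆ ∈ T := by
    intro c₁ c₂ hb₁ hb₂ w hw1 hw2
    have hQadd : ∀ a b : g, (e₁ a = c₁ • a ∧ e₂ a = c₂ • a) → (e₁ b = c₁ • b ∧ e₂ b = c₂ • b) →
        (e₁ (a + b) = c₁ • (a + b) ∧ e₂ (a + b) = c₂ • (a + b)) := by
      intro a b ha hb
      constructor
      · rw [hadd1, ha.1, hb.1, smul_add]
      · rw [hadd2, ha.2, hb.2, smul_add]
    have hQe3 : ∀ v : g, (e₁ v = c₁ • v ∧ e₂ v = c₂ • v) →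
        (e₁ (e₃ v) = c₁ • e₃ v ∧ e₂ (e₃ v) = c₂ • e₃ v) := by
      intro v hv
      constructor
      · show ⁅(t₁ : g), ⁅(t₃ : g), v⁆⁆ = _
        rw [hcomm t₁ t₃ v]
        show e₃ (e₁ v) = _
        rw [hv.1]
        exact lie_smul _ _ _
      · show ⁅(t₂ : g), ⁅(t₃ : g), v⁆⁆ = _
        rw [hcomm t₂ t₃ v]
        show e₃ (e₂ v) = _
        rw [hv.2]
        exact lie_smul _ _ _
    obtain ⟨w₀, w₁, hww, hw₀, hw₁, hw₀q, hw₁q⟩ :=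
      hsplit e₃ hadd3 hid3 (fun v => e₁ v = c₁ • v ∧ e₂ v = c₂ • v) hQadd hQe3 w ⟨hw1, hw2⟩
    rw [hww, add_lie]
    refine T.add_mem ?_ ?_
    · exact hfin c₁ c₂ 0 w₀ hb₁ hb₂ (Or.inl rfl) hw₀q.1 hw₀q.2
        (by rw [zero_smul]; exact hw₀)
    · exact hfin c₁ c₂ 1 w₁ hb₁ hb₂ (Or.inr rfl) hw₁q.1 hw₁q.2
        (by rw [one_smul]; exact hw₁)
  rw [hxa, add_lie]
  refine T.add_mem ?_ ?_
  · rw [ha₀b, add_lie]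
    refine T.add_mem ?_ ?_
    · exact hsplit3 0 0 (Or.inl rfl) (Or.inl rfl) b₀₀
        (by rw [zero_smul]; exact hb₀₀q) (by rw [zero_smul]; exact hb₀₀)
    · exact hsplit3 0 1 (Or.inl rfl) (Or.inr rfl) b₀₁
        (by rw [zero_smul]; exact hb₀₁q) (by rw [one_smul]; exact hb₀₁)
  · rw [ha₁b, add_lie]
    refine T.add_mem ?_ ?_
    · exact hsplit3 1 0 (Or.inr rfl) (Or.inl rfl) b₁₀
        (by rw [one_smul]; exact hb₁₀q) (by rw [zero_smul]; exact hb₁₀)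
    · exact hsplit3 1 1 (Or.inr rfl) (Or.inr rfl) b₁₁
        (by rw [one_smul]; exact hb₁₁q) (by rw [one_smul]; exact hb₁₁)
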